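/- Let ξ > 0, ν > 0 and 0 < ε < ν·e^{−4/ξ}, and set T = (1/4)·ln(ν/ε) − 1/ξ > 0. Suppose r, w, e : [0, T] → ℝ are differentiable with w(t) > 0 for all t, and satisfy r'(t) = −2·r(t), w'(t) = −w(t)², e'(t) = 4·e(t), with r(0) = e^{−2/ξ}, w(0) = ξ, e(0) = ε·e^{4/ξ}. Then r(T) = √(ε/ν), w(T) = 4/ln(ν/ε), and e(T) = ν. -/

import Mathlib

open Real

/-- If a function has derivative zero within `Icc 0 T`, it is constant there. -/
lemma const_of_derivIcc {f : ℝ → ℝ} {T : ℝ} (hT : 0 < T)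
    (h : ∀ t ∈ Set.Icc 0 T, HasDerivWithinAt f 0 (Set.Icc 0 T) t) :
    ∀ t ∈ Set.Icc 0 T, f t = f 0 := by
  apply constant_of_derivWithin_zero
  · exact fun t ht => (h t ht).differentiableWithinAt
  · intro t ht
    exact (h t (Set.mem_Icc_of_Ico ht)).derivWithin (uniqueDiffOn_Icc hT t (Set.mem_Icc_of_Ico ht))

/-- Explicit integration of the reduced flow `r' = −2r, w' = −w², e' = 4e` on the center
manifold in the entry chart `κ₁` of the blowup for the tanh-regularized visible fold:
starting on `Q₁` (`r = e^{−2/ξ}`, `w = ξ`, `e = ε·e^{4/ξ}`), the exit at `{e = ν}` occurs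
with `r = √(ε/ν)` and `w = 4/ln(ν/ε)`. -/
theorem stmt15 (ξ ν ε T : ℝ) (hξ : 0 < ξ) (hν : 0 < ν) (hε : 0 < ε)
    (hεν : ε < ν * Real.exp (-(4 / ξ)))
    (hT : T = 1 / 4 * Real.log (ν / ε) - 1 / ξ)
    (r w e : ℝ → ℝ)
    (hw : ∀ t ∈ Set.Icc 0 T, 0 < w t)
    (hr' : ∀ t ∈ Set.Icc 0 T, HasDerivWithinAt r (-2 * r t) (Set.Icc 0 T) t)
    (hw' : ∀ t ∈ Set.Icc 0 T, HasDerivWithinAt w (-(w t) ^ 2) (Set.Icc 0 T) t)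
    (he' : ∀ t ∈ Set.Icc 0 T, HasDerivWithinAt e (4 * e t) (Set.Icc 0 T) t)
    (hr0 : r 0 = Real.exp (-(2 / ξ))) (hw0 : w 0 = ξ) (he0 : e 0 = ε * Real.exp (4 / ξ)) :
    0 < T ∧ r T = Real.sqrt (ε / ν) ∧ w T = 4 / Real.log (ν / ε) ∧ e T = ν := by
  have hνε : 0 < ν / ε := div_pos hν hε
  have hlog : 4 / ξ < Real.log (ν / ε) := by
    have h1 : ε / ν < Real.exp (-(4 / ξ)) := (div_lt_iff₀ hν).2 (by linarith [hεν])
    have h2 : Real.log (ε / ν) < -(4 / ξ) := by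
      calc Real.log (ε / ν) < Real.log (Real.exp (-(4 / ξ))) :=
            Real.log_lt_log (div_pos hε hν) h1
        _ = -(4 / ξ) := Real.log_exp _
    have h3 : Real.log (ε / ν) = -Real.log (ν / ε) := by
      rw [← Real.log_inv, inv_div]
    rw [h3] at h2
    linarith
  have hT0 : 0 < T := by
    rw [hT]
    have : 1 / ξ < 1 / 4 * Real.log (ν / ε) := by
      rw [div_lt_iff₀ hξ] at hlog
      rw [div_lt_iff₀ hξ]
      nlinarith
    linarith
  -- r
  have hrconst : ∀ t ∈ Set.Icc 0 T, r t * Real.exp (2 * t) = r 0 * Real.exp 0 := by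
    have := const_of_derivIcc hT0 (f := fun t => r t * Real.exp (2 * t)) ?_
    · simpa using this
    intro t ht
    have hexp : HasDerivWithinAt (fun t => Real.exp (2 * t)) (2 * Real.exp (2 * t))
        (Set.Icc 0 T) t := by
      simpa [mul_comm] using
        (((hasDerivAt_id t).const_mul 2).exp.hasDerivWithinAt (s := Set.Icc 0 T))
    have := (hr' t ht).fun_mul hexp
    exact this.congr_deriv (by ring)
  -- e
  have heconst : ∀ t ∈ Set.Icc 0 T, e t * Real.exp (-(4 * t)) = e 0 * Real.exp 0 := by
    have := const_of_derivIcc hT0 (f := fun t => e t * Real.exp (-(4 * t))) ?_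
    · simpa using this
    intro t ht
    have hexp : HasDerivWithinAt (fun t => Real.exp (-(4 * t))) (-4 * Real.exp (-(4 * t)))
        (Set.Icc 0 T) t := by
      simpa [mul_comm] using
        ((((hasDerivAt_id t).const_mul 4).neg).exp.hasDerivWithinAt (s := Set.Icc 0 T))
    have := (he' t ht).fun_mul hexp
    exact this.congr_deriv (by ring)
  -- w
  have hwconst : ∀ t ∈ Set.Icc 0 T, (w t)⁻¹ - t = (w 0)⁻¹ - 0 := by
    apply const_of_derivIcc hT0
    intro t ht
    have hne : w t ≠ 0 := (hw t ht).ne'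
    have hinv : HasDerivWithinAt (fun t => (w t)⁻¹) (-(-(w t) ^ 2) / (w t) ^ 2)
        (Set.Icc 0 T) t := (hw' t ht).inv hne
    have : HasDerivWithinAt (fun t => (w t)⁻¹ - t) (-(-(w t) ^ 2) / (w t) ^ 2 - 1)
        (Set.Icc 0 T) t := hinv.sub (hasDerivWithinAt_id t _)
    convert this using 1
    field_simp
    norm_num
  have hTmem : T ∈ Set.Icc 0 T := Set.right_mem_Icc.2 hT0.le
  have hexpT : Real.exp (Real.log (ν / ε)) = ν / ε := Real.exp_log hνε
  refine ⟨hT0, ?_, ?_, ?_⟩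
  · have h := hrconst T hTmem
    rw [hr0] at h
    have : r T = Real.exp (-(2 / ξ)) * Real.exp (-(2 * T)) := by
      have hpos := Real.exp_pos (2 * T)
      field_simp [Real.exp_neg] at h ⊢
      rw [Real.exp_zero, mul_one] at h
      rw [← h, Real.exp_neg (2 * T), mul_inv_cancel_right₀ hpos.ne']
    rw [this, ← Real.exp_add, hT]
    rw [Real.sqrt_eq_rpow, Real.rpow_def_of_pos (div_pos hε hν)]
    congr 1
    have h3 : Real.log (ε / ν) = -Real.log (ν / ε) := by
      rw [← Real.log_inv, inv_div]
    rw [h3]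
    ring
  · have h := hwconst T hTmem
    rw [hw0] at h
    have hinv : (w T)⁻¹ = 1 / ξ + T := by
      rw [sub_zero] at h
      rw [one_div]
      linarith
    have : (w T)⁻¹ = Real.log (ν / ε) / 4 := by
      rw [hinv, hT]; ring
    have hwT := (hw T hTmem).ne'
    field_simp at this
    rw [eq_div_iff (lt_trans (by positivity) hlog).ne']
    linarith
  · have h := heconst T hTmem
    rw [he0] at h
    have hpos := Real.exp_pos (-(4 * T))
    have : e T = ε * Real.exp (4 / ξ) * Real.exp (4 * T) := by
      rw [Real.exp_zero, mul_one] at h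
      have := Real.exp_neg (4 * T)
      field_simp [Real.exp_neg] at h
      rw [← h, mul_assoc, ← Real.exp_add, neg_add_cancel, Real.exp_zero, mul_one]
    rw [this, mul_assoc, ← Real.exp_add, hT]
    rw [show 4 / ξ + 4 * (1 / 4 * Real.log (ν / ε) - 1 / ξ) = Real.log (ν / ε) by ring]
    rw [hexpT]
    field_simp
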